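/- Let V be a 3-dimensional vector space over a field k of characteristic ≠ 2, q ∈ k nonzero, a, b ∈ V, g a symmetric bilinear form with (q−1)² = −4(g(a,a)g(b,b) − g(a,b)²), T as above, Y the operator of Proposition 3.1, and R = q·Id_{V⊗V} − Y. Then R satisfies the Hecke relation (R − q·Id)(R + Id) = 0. -/

import Mathlib

open Module TensorProduct

theorem stmt14 (k V : Type*) [Field k] [AddCommGroup V] [Module k V]
    [FiniteDimensional k V] (hdim : finrank k V = 3) (hchar : (2 : k) ≠ 0)
    (q : k) (hq : q ≠ 0) (a b : V)
    (g : LinearMap.BilinForm k V) (hg : g.IsSymm)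
    (hΔ : (q - 1) ^ 2 = -(4 * (g a a * g b b - g a b ^ 2)))
    (T : V →ₗ[k] V) (hT : ∀ v, T v = g b v • a - g a v • b)
    (Y : V ⊗[k] V →ₗ[k] V ⊗[k] V)
    (hY : ∀ x y : V, Y (x ⊗ₜ y) =
      g x y • (a ⊗ₜ b - b ⊗ₜ a) + (x ⊗ₜ T y - T y ⊗ₜ x)
        + (y ⊗ₜ T x - T x ⊗ₜ y) + ((q + 1) / 2) • (x ⊗ₜ y - y ⊗ₜ x))
    (R : V ⊗[k] V →ₗ[k] V ⊗[k] V) (hR : R = q • LinearMap.id - Y) :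
    (R - q • LinearMap.id).comp (R + LinearMap.id) = 0 := by
  have key : ∀ u v : V, Y (u ⊗ₜ v - v ⊗ₜ u) = (q + 1) • (u ⊗ₜ v - v ⊗ₜ u) := by
    intro u v
    have hs : g v u = g u v := by simpa using (hg.eq v u)
    rw [map_sub, hY, hY, hs]
    match_scalars <;> field_simp <;> ring
  apply TensorProduct.ext'
  intro x y
  have h1 : Y (Y (x ⊗ₜ y)) = (q + 1) • Y (x ⊗ₜ y) := by
    conv_lhs => rw [hY x y]
    rw [map_add, map_add, map_add, map_smul, map_smul, key, key, key, key, hY x y]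
    match_scalars <;> field_simp <;> ring
  simp only [hR, LinearMap.comp_apply, LinearMap.sub_apply, LinearMap.add_apply,
    LinearMap.smul_apply, LinearMap.id_apply, LinearMap.zero_apply]
  rw [map_add, map_sub, map_smul, h1]
  module
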